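/- Let τ be an infinite cardinal, U a free ultrafilter on τ, and X = τ ∪ {U} ⊆ βτ with the subspace topology. Then every regular closed subset of X is clopen, i.e., RC(X) = CO(X). -/
import Mathlib


open Set Topology

section Defs

variable {X : Type*}

/-- A set is regular closed if it equals the closure of its interior. -/
def IsRegClosed [TopologicalSpace X] (C : Set X) : Prop := closure (interior C) = C

/-- A set is regular open if it equals the interior of its closure. -/
def IsRegOpen [TopologicalSpace X] (V : Set X) : Prop := interior (closure V) = V

/-- A countable κ-metric: axioms (K1)-(K3) and (K4_ω). -/
structure IsCountKappaMetric [TopologicalSpace X] (ρ : X → Set X → ℝ) : Prop where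
  nonneg : ∀ x C, IsRegClosed C → 0 ≤ ρ x C
  k1 : ∀ x C, IsRegClosed C → (ρ x C = 0 ↔ x ∈ C)
  k2 : ∀ x C D, IsRegClosed C → IsRegClosed D → C ⊆ D → ρ x D ≤ ρ x C
  k3 : ∀ C, IsRegClosed C → Continuous fun x => ρ x C
  k4omega : ∀ C : ℕ → Set X, (∀ n, IsRegClosed (C n)) → (∀ n, C n ⊆ C (n + 1)) →
    ∀ x, ρ x (closure (⋃ n, C n)) = ⨅ n, ρ x (C n)

/-- Axiom (K4): the infimum identity for arbitrary nonempty totally ordered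
(by inclusion) families of regular closed sets. -/
def K4Chains [TopologicalSpace X] (ρ : X → Set X → ℝ) : Prop :=
  ∀ 𝒞 : Set (Set X), 𝒞.Nonempty → (∀ C ∈ 𝒞, IsRegClosed C) →
    (∀ C ∈ 𝒞, ∀ D ∈ 𝒞, C ⊆ D ∨ D ⊆ C) →
    ∀ x, ρ x (closure (⋃₀ 𝒞)) = sInf ((ρ x) '' 𝒞)

/-- A (full) κ-metric: axioms (K1)-(K4). -/
structure IsKappaMetric [TopologicalSpace X] (ρ : X → Set X → ℝ)
    extends IsCountKappaMetric ρ : Prop where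
  k4 : K4Chains ρ

/-- Countable chain condition. -/
def CCCSpace (X : Type*) [TopologicalSpace X] : Prop :=
  ∀ 𝒪 : Set (Set X), (∀ U ∈ 𝒪, IsOpen U ∧ U.Nonempty) →
    𝒪.PairwiseDisjoint id → 𝒪.Countable

/-- Pseudocompactness: every continuous real-valued function is bounded. -/
def Pseudocompact (X : Type*) [TopologicalSpace X] : Prop :=
  ∀ f : X → ℝ, Continuous f → ∃ M, ∀ x, |f x| ≤ M

/-- d-open maps. -/
def IsDOpen {Y : Type*} [TopologicalSpace X] [TopologicalSpace Y] (f : X → Y) : Prop :=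
  ∀ U : Set X, IsOpen U → f '' U ⊆ interior (closure (f '' U))

/-- Q-admissible families of regular open sets with respect to ρ. -/
def QAdmissible [TopologicalSpace X] (ρ : X → Set X → ℝ) (P : Set (Set X)) : Prop :=
  (∀ V ∈ P, IsRegOpen V) ∧
  (∀ V ∈ P, ∀ q : ℚ,
    interior ((fun x => ρ x (closure V)) ⁻¹' Iic (q : ℝ)) ∈ P ∧
    interior ((fun x => ρ x (closure V)) ⁻¹' Ici (q : ℝ)) ∈ P) ∧
  (∀ V ∈ P, interior Vᶜ ∈ P) ∧
  (∀ U ∈ P, ∀ V ∈ P, U ∩ V ∈ P ∧ interior (closure (U ∪ V)) ∈ P)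

/-- The equivalence relation ∼_P. -/
def pSetoid (P : Set (Set X)) : Setoid X where
  r x y := ∀ V ∈ P, (x ∈ V ↔ y ∈ V)
  iseqv := ⟨fun _ _ _ => Iff.rfl, fun h V hV => (h V hV).symm,
    fun h1 h2 V hV => (h1 V hV).trans (h2 V hV)⟩

/-- The quotient X_P. -/
def XP (P : Set (Set X)) : Type _ := Quotient (pSetoid P)

/-- The quotient map q : X → X_P. -/
def qP (P : Set (Set X)) : X → XP P := Quotient.mk (pSetoid P)

/-- The topology on X_P generated by images of members of P. -/
def topXP [TopologicalSpace X] (P : Set (Set X)) : TopologicalSpace (XP P) :=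
  TopologicalSpace.generateFrom ((fun V => qP P '' V) '' P)

end Defs

section Ult

variable {τ : Type*} (U : Ultrafilter τ)

/-- The space X = τ ∪ {U} ⊆ βτ, as a subspace of the space of ultrafilters on
the discrete space τ. -/
def UltSp : Type _ := {u : Ultrafilter τ // (∃ a, u = pure a) ∨ u = U}

instance : TopologicalSpace (UltSp U) :=
  instTopologicalSpaceSubtype

/-- The point of X corresponding to the ultrafilter U. -/
def UltSp.pt : UltSp U := ⟨U, Or.inr rfl⟩

/-- The point of X corresponding to an element a of τ. -/
def UltSp.ofBase (a : τ) : UltSp U := ⟨pure a, Or.inl ⟨a, rfl⟩⟩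

/-- "C ∩ τ ∈ U", for a subset C of X. -/
def UltSp.traceMem (C : Set (UltSp U)) : Prop := {a : τ | UltSp.ofBase U a ∈ C} ∈ U

/-- U is a free ultrafilter. -/
def UltSp.Free : Prop := ∀ a : τ, U ≠ pure a

/-- The indicator "κ-metric" ρ(x,C) = 0 iff x ∈ C, else 1. -/
noncomputable def UltSp.rho : UltSp U → Set (UltSp U) → ℝ :=
  fun x C => Cᶜ.indicator (fun _ => (1 : ℝ)) x

end Ult
lemma ult_eq_pure_of_singleton_mem {τ : Type*} {u : Ultrafilter τ} {a : τ}
    (h : {a} ∈ u) : u = pure a := by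
  apply Ultrafilter.coe_injective
  simpa using (u.neBot.eq_pure_iff).mpr h

/-- in X = τ ∪ {U}, every regular closed set is clopen. -/
theorem stmt2 {τ : Type*} [Infinite τ] (U : Ultrafilter τ) (hfree : UltSp.Free U)
    (C : Set (UltSp U)) (hC : IsRegClosed C) : IsClopen C := by
  have hBopen : ∀ s : Set τ, IsOpen {x : UltSp U | s ∈ x.1} := fun s =>
    (ultrafilter_isOpen_basic s).preimage continuous_subtype_val
  have hclosed : IsClosed C := by rw [← hC]; exact isClosed_closure
  refine ⟨hclosed, ?_⟩
  rw [isOpen_iff_forall_mem_open]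
  intro x hx
  rcases x.2 with ⟨a, ha⟩ | hU
  · -- isolated point
    refine ⟨{y : UltSp U | {a} ∈ y.1}, fun y hy => ?_, hBopen _, ?_⟩
    · have : y = x := Subtype.ext (by rw [ha]; exact ult_eq_pure_of_singleton_mem hy)
      rwa [this]
    · show {a} ∈ x.1
      rw [ha]; exact Ultrafilter.mem_pure.mpr rfl
  · -- x corresponds to U
    by_cases hx' : x ∈ interior C
    · exact ⟨interior C, interior_subset, isOpen_interior, hx'⟩
    · set T : Set τ := {a | UltSp.ofBase U a ∈ interior C} with hT
      have hTU : T ∈ U := by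
        by_contra hTn
        have hTc : Tᶜ ∈ U := Ultrafilter.compl_mem_iff_notMem.mpr hTn
        have hxcl : x ∈ closure (interior C) := by rw [hC]; exact hx
        rcases mem_closure_iff.mp hxcl _ (hBopen Tᶜ) (show Tᶜ ∈ x.1 by rw [hU]; exact hTc) with
          ⟨y, hyB, hyI⟩
        rcases y.2 with ⟨b, hb⟩ | hbU
        · have hbT : b ∈ T := by
            have : y = UltSp.ofBase U b := Subtype.ext hb
            rwa [hT, Set.mem_setOf_eq, ← this]
          have : Tᶜ ∈ (pure b : Ultrafilter τ) := by rw [← hb]; exact hyB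
          exact this hbT
        · have : y = x := Subtype.ext (hbU.trans hU.symm)
          exact hx' (this ▸ hyI)
      refine ⟨{y : UltSp U | T ∈ y.1}, fun y hy => ?_, hBopen _, show T ∈ x.1 by rw [hU]; exact hTU⟩
      rcases y.2 with ⟨b, hb⟩ | hbU
      · have hbT : b ∈ T := by
          have : T ∈ (pure b : Ultrafilter τ) := by rw [← hb]; exact hy
          exact this
        have : y = UltSp.ofBase U b := Subtype.ext hb
        rw [this]
        exact interior_subset hbT
      · have : y = x := Subtype.ext (hbU.trans hU.symm)
        rw [this]; exact hx
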